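/- arXiv:1803.00115 — 3 statements merged into one kernel-verified Lean document; each statement's English description precedes it below -/
import Mathlib

section
/- Let G=(V,E) be a finite graph with interior vertex u, let q: E → ℝ be symmetric and z: V → ℂ with z_u ≠ z_v on every edge and z_v ≠ 0 for all v. Suppose ∑_{v~u} q_{uv} = 0 and ∑_{v~u} q_{uv}/(z_u - z_v) = 0. Then ∑_{v~u} q_{uv}/(1/z_u - 1/z_v) = 0, i.e., the inversion z ↦ 1/z preserves the holomorphic quadratic differential equation at u. -/
/-- Inversion z ↦ 1/z preserves the holomorphic quadratic differential equation
at an interior vertex u, given ∑ q = 0 and ∑ q/(z_u - z_v) = 0 there. -/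
theorem stmt_1 {V : Type*} [Fintype V] [DecidableEq V]
    (G : SimpleGraph V) [DecidableRel G.Adj]
    (q : V → V → ℝ) (hsym : ∀ u v, q u v = q v u)
    (z : V → ℂ) (hz : ∀ u v, G.Adj u v → z u ≠ z v)
    (hz0 : ∀ v, z v ≠ 0) (u : V)
    (h1 : ∑ v ∈ G.neighborFinset u, (q u v : ℂ) = 0)
    (h2 : ∑ v ∈ G.neighborFinset u, (q u v : ℂ) / (z u - z v) = 0) :
    ∑ v ∈ G.neighborFinset u, (q u v : ℂ) / (1 / z u - 1 / z v) = 0 := by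
  have key : ∑ v ∈ G.neighborFinset u, (q u v : ℂ) / (1 / z u - 1 / z v)
      = ∑ v ∈ G.neighborFinset u,
        (z u * (q u v : ℂ) - z u ^ 2 * ((q u v : ℂ) / (z u - z v))) := by
    refine Finset.sum_congr rfl fun v hv => ?_
    have hadj : G.Adj u v := by rwa [SimpleGraph.mem_neighborFinset] at hv
    have h3 : z u - z v ≠ 0 := sub_ne_zero.mpr (hz u v hadj)
    have h4 : z v - z u ≠ 0 := sub_ne_zero.mpr (hz u v hadj).symm
    rw [one_div, one_div, inv_sub_inv (hz0 u) (hz0 v), div_div_eq_mul_div]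
    field_simp
    ring
  rw [key, Finset.sum_sub_distrib, ← Finset.mul_sum, ← Finset.mul_sum, h1, h2]
  ring
end

section
/- Consider the star graph with center v and three boundary vertices with boundary values 2, 1, 0 and edge conductances c₀, c₁, c₂ > 0 with c₀ + c₁ + c₂ = 1. Then the harmonic extension satisfies h(v) = 2c₀ + c₁, and the double integral 2∫₀¹∫₀^{1−c₀} (2c₀+c₁−2)²(2c₀+c₁−1)²(2c₀+c₁)² / (−4c₀² − 4c₁c₀ + 4c₀ − c₁² + c₁)³ dc₁ dc₀ equals 2. -/
open Real intervalIntegral MeasureTheory Set Filter Topology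

set_option maxHeartbeats 4000000 in
lemma inner_eval (c : ℝ) (h0 : 0 < c) (h1 : c < 1) :
    (∫ c₁ in (0:ℝ)..(1 - c),
        ((2 * c + c₁ - 2) ^ 2 * (2 * c + c₁ - 1) ^ 2 * (2 * c + c₁) ^ 2)
          / (-4 * c ^ 2 - 4 * c₁ * c + 4 * c - c₁ ^ 2 + c₁) ^ 3)
    = (128*c^3+48*c^2-46*c-13)/(2*(1+8*c)^2) - 3*Real.log 2
      + (5+52*c+264*c^2+480*c^3)/((1+8*c)^2*Real.sqrt (1+8*c))
        * (Real.log (Real.sqrt (1+8*c)+1) - Real.log (Real.sqrt (1+8*c)-1)) := by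
  set s := Real.sqrt (1+8*c) with hsdef
  have hq : (0:ℝ) < 1+8*c := by linarith
  have hs2 : s^2 = 1+8*c := Real.sq_sqrt hq.le
  have hs1 : 1 < s := by
    rw [hsdef, show (1:ℝ) = Real.sqrt 1 from (Real.sqrt_one).symm]
    exact Real.sqrt_lt_sqrt (by norm_num) (by rw [Real.sqrt_one]; linarith)
  have hs3 : s < 3 := by
    rw [hsdef]
    rw [show (3:ℝ) = Real.sqrt 9 by
      rw [show (9:ℝ) = 3^2 by norm_num, Real.sqrt_sq (by norm_num : (0:ℝ) ≤ 3)]]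
    exact Real.sqrt_lt_sqrt (by linarith) (by linarith)
  have hspos : 0 < s := by linarith
  have hc : c = (s^2-1)/8 := by rw [hs2]; ring
  have hEpos : ∀ x ∈ Icc (0:ℝ) (1-c), 0 < -4*c^2-4*x*c+4*c-x^2+x := by
    intro x hx
    nlinarith [mul_pos h0 (by linarith : (0:ℝ) < 1-c),
      mul_nonneg (by linarith [hx.2] : (0:ℝ) ≤ 1-c-x) (by linarith [hx.1] : (0:ℝ) ≤ 3*c+x)]
  have hABkey : ∀ x : ℝ, (s+(4*c-1)+2*x) * (s-(4*c-1)-2*x)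
      = 4*(-4*c^2-4*x*c+4*c-x^2+x) := by
    intro x; linear_combination hs2
  have hApos : ∀ x ∈ Icc (0:ℝ) (1-c), 0 < s+(4*c-1)+2*x := by
    intro x hx
    have h4 : 0 < (s+(4*c-1)+2*x) * (s-(4*c-1)-2*x) := by
      rw [hABkey x]; linarith [hEpos x hx]
    rcases mul_pos_iff.mp h4 with h | h
    · exact h.1
    · linarith [h.1, h.2]
  have hBpos : ∀ x ∈ Icc (0:ℝ) (1-c), 0 < s-(4*c-1)-2*x := by
    intro x hx
    have h4 : 0 < (s+(4*c-1)+2*x) * (s-(4*c-1)-2*x) := by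
      rw [hABkey x]; linarith [hEpos x hx]
    rcases mul_pos_iff.mp h4 with h | h
    · exact h.2
    · linarith [h.1, h.2]
  set F : ℝ → ℝ := fun x =>
      (56*c^2+304*c^3-136*c^4-2912*c^5+4736*c^6-2048*c^7
        + (16*c-48*c^2-992*c^3-1472*c^4+7616*c^5-5120*c^6)*x
        + (-46*c-250*c^2+576*c^3+4192*c^4-5120*c^5)*x^2
        + (-1+24*c+340*c^2+784*c^3-2560*c^4)*x^3
        + (2+22*c-32*c^2-640*c^3)*x^4
        + (-(1+16*c+64*c^2))*x^5)
        / ((1+8*c)^2 * (-4*c^2-4*x*c+4*c-x^2+x)^2)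
      + (3/2) * Real.log (-4*c^2-4*x*c+4*c-x^2+x)
      + (5+52*c+264*c^2+480*c^3)/(2*(1+8*c)^2*s)
        * (Real.log (s+(4*c-1)+2*x) - Real.log (s-(4*c-1)-2*x)) with hF
  have hderiv : ∀ x ∈ uIcc (0:ℝ) (1-c),
      HasDerivAt F
        (((2 * c + x - 2) ^ 2 * (2 * c + x - 1) ^ 2 * (2 * c + x) ^ 2)
          / (-4 * c ^ 2 - 4 * x * c + 4 * c - x ^ 2 + x) ^ 3) x := by
    intro x hx
    rw [uIcc_of_le (by linarith : (0:ℝ) ≤ 1-c)] at hx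
    have hE := hEpos x hx
    have hA := hApos x hx
    have hB := hBpos x hx
    have hEder := ((((hasDerivAt_const x (-4*c^2)).sub
        (((hasDerivAt_id' x).const_mul (4:ℝ)).mul_const c)).add
        (hasDerivAt_const x (4*c))).sub (hasDerivAt_pow 2 x)).add (hasDerivAt_id' x)
    have hnum := (((((hasDerivAt_const x
          (56*c^2+304*c^3-136*c^4-2912*c^5+4736*c^6-2048*c^7)).add
        ((hasDerivAt_id' x).const_mul (16*c-48*c^2-992*c^3-1472*c^4+7616*c^5-5120*c^6))).add
        ((hasDerivAt_pow 2 x).const_mul (-46*c-250*c^2+576*c^3+4192*c^4-5120*c^5))).add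
        ((hasDerivAt_pow 3 x).const_mul (-1+24*c+340*c^2+784*c^3-2560*c^4))).add
        ((hasDerivAt_pow 4 x).const_mul (2+22*c-32*c^2-640*c^3))).add
        ((hasDerivAt_pow 5 x).const_mul (-(1+16*c+64*c^2)))
    have hden := (hEder.pow 2).const_mul ((1+8*c)^2)
    have hdenne : (1+8*c)^2 * (-4*c^2-4*x*c+4*c-x^2+x)^2 ≠ 0 := by positivity
    have hfrac := hnum.div hden hdenne
    have hlogE := (hEder.log (ne_of_gt hE)).const_mul (3/2 : ℝ)
    have hAder := ((hasDerivAt_id' x).const_mul (2:ℝ)).const_add (s+(4*c-1))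
    have hBder := ((hasDerivAt_id' x).const_mul (2:ℝ)).const_sub (s-(4*c-1))
    have hlogpair := ((hAder.log (ne_of_gt hA)).sub (hBder.log (ne_of_gt hB))).const_mul
      ((5+52*c+264*c^2+480*c^3)/(2*(1+8*c)^2*s))
    have key : 2*1/(s+(4*c-1)+2*x) - -(2*1)/(s-(4*c-1)-2*x)
        = (4*s)/(4*(-4*c^2-4*x*c+4*c-x^2+x)) := by
      rw [div_sub_div _ _ (ne_of_gt hA) (ne_of_gt hB), hABkey x]
      congr 1
      ring
    have hlogpair2 : HasDerivAt (fun y : ℝ =>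
        (5+52*c+264*c^2+480*c^3)/(2*(1+8*c)^2*s)
          * (Real.log (s+(4*c-1)+2*y) - Real.log (s-(4*c-1)-2*y)))
        ((5+52*c+264*c^2+480*c^3)
          /(2*(1+8*c)^2*(-4*c^2-4*x*c+4*c-x^2+x))) x := by
      refine hlogpair.congr_deriv ?_
      symm
      rw [key]
      have hs0 : s ≠ 0 := ne_of_gt hspos
      have hE0 : (-4*c^2-4*x*c+4*c-x^2+x) ≠ 0 := ne_of_gt hE
      have hq0 : (1+8*c) ≠ 0 := ne_of_gt hq
      have n1 : (2*(1+8*c)^2*(-4*c^2-4*x*c+4*c-x^2+x)) ≠ 0 := by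
        exact mul_ne_zero (by positivity) hE0
      have n2 : (2*(1+8*c)^2*s*(4*(-4*c^2-4*x*c+4*c-x^2+x))) ≠ 0 := by
        exact mul_ne_zero (mul_ne_zero (by positivity) hs0) (mul_ne_zero (by norm_num) hE0)
      rw [div_mul_div_comm, div_eq_div_iff n1 n2]
      ring
    have htot := (hfrac.add hlogE).add hlogpair2
    rw [hF]
    refine htot.congr_deriv ?_
    symm
    simp only [Pi.add_apply, Pi.sub_apply, Pi.mul_apply, Pi.div_apply, Pi.pow_apply, Pi.neg_apply]
    have hE0 : (-4*c^2-4*x*c+4*c-x^2+x) ≠ 0 := ne_of_gt hE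
    have hq0 : (1+8*c) ≠ 0 := ne_of_gt hq
    have hB1 : ((1+8*c)^2 * (-4*c^2-4*x*c+4*c-x^2+x)^2)^2 ≠ 0 :=
      pow_ne_zero 2 (mul_ne_zero (pow_ne_zero 2 hq0) (pow_ne_zero 2 hE0))
    have h2qE : 2*(1+8*c)^2*(-4*c^2-4*x*c+4*c-x^2+x) ≠ 0 :=
      mul_ne_zero (by positivity) hE0
    rw [mul_div_assoc', div_add_div _ _ hB1 hE0,
      div_add_div _ _ (mul_ne_zero hB1 hE0) h2qE,
      div_eq_div_iff (pow_ne_zero 3 hE0) (mul_ne_zero (mul_ne_zero hB1 hE0) h2qE)]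
    ring
  have hcont : IntervalIntegrable (fun x : ℝ =>
      ((2 * c + x - 2) ^ 2 * (2 * c + x - 1) ^ 2 * (2 * c + x) ^ 2)
        / (-4 * c ^ 2 - 4 * x * c + 4 * c - x ^ 2 + x) ^ 3) volume 0 (1-c) := by
    apply ContinuousOn.intervalIntegrable
    apply ContinuousOn.div
    · fun_prop
    · fun_prop
    · intro x hx
      rw [uIcc_of_le (by linarith : (0:ℝ) ≤ 1-c)] at hx
      exact pow_ne_zero 3 (ne_of_gt (hEpos x hx))
  rw [integral_eq_sub_of_hasDerivAt hderiv hcont]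
  simp only [hF]
  have hc0 : c ≠ 0 := ne_of_gt h0
  have h1c : (1:ℝ) - c ≠ 0 := by linarith
  have hq0 : (1:ℝ) + 8*c ≠ 0 := ne_of_gt hq
  have hs0 : s ≠ 0 := ne_of_gt hspos
  have hcc : c * (1-c) ≠ 0 := mul_ne_zero hc0 h1c
  rw [show (-4*c^2-4*(1-c)*c+4*c-(1-c)^2+(1-c)) = c*(1-c) by ring]
  rw [show (-4*c^2-4*(0:ℝ)*c+4*c-(0:ℝ)^2+(0:ℝ)) = 2^2*(c*(1-c)) by ring]
  rw [show s+(4*c-1)+2*(1-c) = (s+1)*(s+3)/4 by linear_combination -hs2/4]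
  rw [show s-(4*c-1)-2*(1-c) = (s-1)*(3-s)/4 by linear_combination hs2/4]
  rw [show s+(4*c-1)+2*(0:ℝ) = (s-1)*(s+3)/2 by linear_combination -hs2/2]
  rw [show s-(4*c-1)-2*(0:ℝ) = (s+1)*(3-s)/2 by linear_combination hs2/2]
  have hsp1 : (0:ℝ) < s+1 := by linarith
  have hsm1 : (0:ℝ) < s-1 := by linarith
  have hsp3 : (0:ℝ) < s+3 := by linarith
  have hs3m : (0:ℝ) < 3-s := by linarith
  rw [Real.log_mul hc0 h1c,
    Real.log_mul (by positivity : ((2:ℝ)^2) ≠ 0) hcc, Real.log_mul hc0 h1c,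
    Real.log_pow,
    Real.log_div (by positivity : (s+1)*(s+3) ≠ 0) (by norm_num : (4:ℝ) ≠ 0),
    Real.log_mul hsp1.ne' hsp3.ne',
    Real.log_div (by positivity : (s-1)*(3-s) ≠ 0) (by norm_num : (4:ℝ) ≠ 0),
    Real.log_mul hsm1.ne' hs3m.ne',
    Real.log_div (by positivity : (s-1)*(s+3) ≠ 0) (by norm_num : (2:ℝ) ≠ 0),
    Real.log_mul hsm1.ne' hsp3.ne',
    Real.log_div (by positivity : (s+1)*(3-s) ≠ 0) (by norm_num : (2:ℝ) ≠ 0),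
    Real.log_mul hsp1.ne' hs3m.ne',
    show (4:ℝ) = 2^2 by norm_num, Real.log_pow]
  push_cast
  field_simp
  ring

noncomputable def Afun : ℝ → ℝ := fun y =>
  y^2/2 + y/8 + 5*(1+8*y)/64 + 9/(32*(1+8*y)) - 3*y*Real.log 2
  + ((Real.sqrt (1+8*y))^2-1)*(5*(Real.sqrt (1+8*y))^4+26*(Real.sqrt (1+8*y))^2+9)
      /(64*(Real.sqrt (1+8*y))^3) * (2*Real.log (Real.sqrt (1+8*y)+1) - Real.log 8)

noncomputable def Kfun : ℝ → ℝ := fun y =>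
  (5*(Real.sqrt (1+8*y))^4+26*(Real.sqrt (1+8*y))^2+9)/(8*(Real.sqrt (1+8*y))^3)

noncomputable def Phi : ℝ → ℝ := fun y => Afun y - Kfun y * (y * Real.log y)

set_option maxHeartbeats 4000000 in
lemma hasDerivPhi (y : ℝ) (hy : 0 < y) : HasDerivAt Phi
    ((128*y^3+48*y^2-46*y-13)/(2*(1+8*y)^2) - 3*Real.log 2
      + (5+52*y+264*y^2+480*y^3)/((1+8*y)^2*Real.sqrt (1+8*y))
        * (Real.log (Real.sqrt (1+8*y)+1) - Real.log (Real.sqrt (1+8*y)-1))) y := by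
  set s := Real.sqrt (1+8*y) with hsdef
  have hq : (0:ℝ) < 1+8*y := by linarith
  have hs2 : s^2 = 1+8*y := Real.sq_sqrt hq.le
  have hs1 : 1 < s := by
    rw [hsdef, show (1:ℝ) = Real.sqrt 1 from (Real.sqrt_one).symm]
    exact Real.sqrt_lt_sqrt (by norm_num) (by rw [Real.sqrt_one]; linarith)
  have hspos : 0 < s := by linarith
  have hs0 : s ≠ 0 := ne_of_gt hspos
  have hc : y = (s^2-1)/8 := by rw [hs2]; ring
  have hsp1 : (0:ℝ) < s + 1 := by linarith
  have hlin : HasDerivAt (fun y : ℝ => 1+8*y) (8*1) y :=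
    ((hasDerivAt_id' y).const_mul (8:ℝ)).const_add (1:ℝ)
  have hS : HasDerivAt (fun y : ℝ => Real.sqrt (1+8*y)) (1/(2*s)*(8*1)) y := by
    have := (Real.hasDerivAt_sqrt (ne_of_gt hq)).comp y hlin
    simpa [Function.comp_def, hsdef] using this
  have h1 := (hasDerivAt_pow 2 y).div_const (2:ℝ)
  have h2 := (hasDerivAt_id' y).div_const (8:ℝ)
  have h3 := (hlin.const_mul (5:ℝ)).div_const (64:ℝ)
  have h4 := (hasDerivAt_const y (9:ℝ)).div (hlin.const_mul (32:ℝ))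
    (by exact mul_ne_zero (by norm_num) (ne_of_gt hq))
  have h5 := ((hasDerivAt_id' y).const_mul (3:ℝ)).mul_const (Real.log 2)
  have hVnum := ((hS.pow 2).sub_const (1:ℝ)).mul
    ((((hS.pow 4).const_mul (5:ℝ)).add ((hS.pow 2).const_mul (26:ℝ))).add_const (9:ℝ))
  have hVden := (hS.pow 3).const_mul (64:ℝ)
  have hV := hVnum.div hVden (by exact mul_ne_zero (by norm_num) (pow_ne_zero 3 hs0))
  have hL := (((hS.add_const (1:ℝ)).log (ne_of_gt hsp1)).const_mul (2:ℝ)).sub_const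
    (Real.log 8)
  have hVL := hV.mul hL
  have hA := ((((h1.add h2).add h3).add h4).sub h5).add hVL
  have hKnum := (((hS.pow 4).const_mul (5:ℝ)).add ((hS.pow 2).const_mul (26:ℝ))).add_const (9:ℝ)
  have hKden := (hS.pow 3).const_mul (8:ℝ)
  have hK := hKnum.div hKden (by exact mul_ne_zero (by norm_num) (pow_ne_zero 3 hs0))
  have hyl := (hasDerivAt_id' y).mul (Real.hasDerivAt_log (ne_of_gt hy))
  have htot := hA.sub (hK.mul hyl)
  have hPhi : Phi = fun y => Afun y - Kfun y * (y * Real.log y) := rfl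
  rw [hPhi]
  unfold Afun Kfun
  refine htot.congr_deriv ?_
  symm
  simp only [Pi.add_apply, Pi.sub_apply, Pi.mul_apply, Pi.div_apply, Pi.pow_apply, Pi.neg_apply]
  rw [← hsdef]
  rw [show Real.log (s-1) = Real.log 8 + Real.log y - Real.log (s+1) by
    rw [show s-1 = 8*y/(s+1) by
      rw [eq_div_iff (ne_of_gt hsp1)]; linear_combination hs2]
    rw [Real.log_div (by positivity) (ne_of_gt hsp1),
      Real.log_mul (by norm_num) (ne_of_gt hy)]]
  rw [mul_inv_cancel₀ (ne_of_gt hy)]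
  rw [hc]
  rw [show (1:ℝ)+8*((s^2-1)/8) = s^2 by ring]
  have hsp1' : s + 1 ≠ 0 := ne_of_gt hsp1
  field_simp
  ring

lemma sqrt9 : Real.sqrt (1+8*(1:ℝ)) = 3 := by
  rw [show (1:ℝ)+8*1 = 3^2 by norm_num]
  exact Real.sqrt_sq (by norm_num)

lemma sqrt1 : Real.sqrt (1+8*(0:ℝ)) = 1 := by
  rw [show (1:ℝ)+8*0 = 1 by norm_num]
  exact Real.sqrt_one

lemma phi_one : Phi 1 = 87/64 := by
  unfold Phi Afun Kfun
  rw [sqrt9, Real.log_one,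
    show (3:ℝ)+1 = 2^2 by norm_num, Real.log_pow,
    show (8:ℝ) = 2^3 by norm_num, Real.log_pow]
  push_cast
  ring_nf

lemma tendsto_phi_one : Filter.Tendsto Phi (nhdsWithin 1 (Set.Iio 1)) (nhds (87/64)) := by
  rw [← phi_one]
  exact ((hasDerivPhi 1 one_pos).continuousAt.tendsto).mono_left nhdsWithin_le_nhds

lemma contA : ContinuousAt Afun 0 := by
  have hsq : ContinuousAt (fun y : ℝ => Real.sqrt (1+8*y)) 0 :=
    Real.continuous_sqrt.continuousAt.comp (by fun_prop)
  unfold Afun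
  apply ContinuousAt.add
  · apply ContinuousAt.sub
    · apply ContinuousAt.add
      · fun_prop
      · exact ContinuousAt.div (by fun_prop) (by fun_prop) (by norm_num)
    · fun_prop
  · apply ContinuousAt.mul
    · apply ContinuousAt.div
      · exact ((hsq.pow 2).sub continuousAt_const).mul
          (((continuousAt_const.mul (hsq.pow 4)).add
            (continuousAt_const.mul (hsq.pow 2))).add continuousAt_const)
      · exact continuousAt_const.mul (hsq.pow 3)
      · norm_num [sqrt1]
    · apply ContinuousAt.sub
      · exact continuousAt_const.mul ((hsq.add continuousAt_const).log (by norm_num [sqrt1]))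
      · exact continuousAt_const

lemma contK : ContinuousAt Kfun 0 := by
  have hsq : ContinuousAt (fun y : ℝ => Real.sqrt (1+8*y)) 0 :=
    Real.continuous_sqrt.continuousAt.comp (by fun_prop)
  unfold Kfun
  apply ContinuousAt.div
  · exact (((continuousAt_const.mul (hsq.pow 4)).add
      (continuousAt_const.mul (hsq.pow 2))).add continuousAt_const)
  · exact continuousAt_const.mul (hsq.pow 3)
  · norm_num [sqrt1]

lemma tendsto_phi_zero : Filter.Tendsto Phi (nhdsWithin 0 (Set.Ioi 0)) (nhds (23/64)) := by
  have hyl : Filter.Tendsto (fun y : ℝ => y * Real.log y) (nhdsWithin 0 (Set.Ioi 0)) (nhds 0) := by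
    have h := tendsto_log_mul_rpow_nhdsGT_zero zero_lt_one
    simp only [Real.rpow_one] at h
    exact h.congr (fun x => mul_comm _ _)
  have hA0 : Filter.Tendsto Afun (nhdsWithin 0 (Set.Ioi 0)) (nhds (Afun 0)) :=
    contA.tendsto.mono_left nhdsWithin_le_nhds
  have hK0 : Filter.Tendsto Kfun (nhdsWithin 0 (Set.Ioi 0)) (nhds (Kfun 0)) :=
    contK.tendsto.mono_left nhdsWithin_le_nhds
  have htot : Filter.Tendsto Phi (nhdsWithin 0 (Set.Ioi 0)) (nhds (Afun 0 - Kfun 0 * 0)) :=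
    hA0.sub (hK0.mul hyl)
  have hval : Afun 0 - Kfun 0 * 0 = 23/64 := by
    unfold Afun Kfun
    norm_num [sqrt1]
  rwa [hval] at htot

lemma log_integrable01 : IntervalIntegrable Real.log volume 0 1 := by
  have hg : IntervalIntegrable (fun x : ℝ => 2 * x ^ (-(1/2) : ℝ)) volume 0 1 :=
    (intervalIntegrable_rpow' (by norm_num)).const_mul 2
  apply hg.mono_fun' Real.measurable_log.aestronglyMeasurable
  rw [uIoc_of_le (by norm_num : (0:ℝ) ≤ 1)]
  filter_upwards [ae_restrict_mem measurableSet_Ioc] with x hx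
  have hx0 : 0 < x := hx.1
  have hx1 : x ≤ 1 := hx.2
  have hrp : 0 < x ^ (-(1/2) : ℝ) := Real.rpow_pos_of_pos hx0 _
  have hlog : Real.log (x ^ (-(1/2) : ℝ)) = -(1/2) * Real.log x := Real.log_rpow hx0 _
  have hle : Real.log (x ^ (-(1/2) : ℝ)) ≤ x ^ (-(1/2) : ℝ) - 1 :=
    Real.log_le_sub_one_of_pos hrp
  have habs : ‖Real.log x‖ = -Real.log x := by
    rw [Real.norm_eq_abs, abs_of_nonpos (Real.log_nonpos hx0.le hx1)]
  rw [habs]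
  nlinarith [hrp]

noncomputable def Gfun : ℝ → ℝ := fun y =>
  ((128*y^3+48*y^2-46*y-13)/(2*(1+8*y)^2) - 3*Real.log 2
    + (5+52*y+264*y^2+480*y^3)/((1+8*y)^2*Real.sqrt (1+8*y))
      * (2*Real.log (Real.sqrt (1+8*y)+1) - Real.log 8))
  - (5+52*y+264*y^2+480*y^3)/((1+8*y)^2*Real.sqrt (1+8*y)) * Real.log y

lemma iclosed_alt (y : ℝ) (h0 : 0 < y) :
    (128*y^3+48*y^2-46*y-13)/(2*(1+8*y)^2) - 3*Real.log 2
      + (5+52*y+264*y^2+480*y^3)/((1+8*y)^2*Real.sqrt (1+8*y))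
        * (Real.log (Real.sqrt (1+8*y)+1) - Real.log (Real.sqrt (1+8*y)-1)) = Gfun y := by
  set s := Real.sqrt (1+8*y) with hsdef
  have hq : (0:ℝ) < 1+8*y := by linarith
  have hs2 : s^2 = 1+8*y := Real.sq_sqrt hq.le
  have hs1 : 1 < s := by
    rw [hsdef, show (1:ℝ) = Real.sqrt 1 from (Real.sqrt_one).symm]
    exact Real.sqrt_lt_sqrt (by norm_num) (by rw [Real.sqrt_one]; linarith)
  have hsp1 : (0:ℝ) < s + 1 := by linarith
  simp only [Gfun]
  rw [← hsdef]
  rw [show Real.log (s-1) = Real.log 8 + Real.log y - Real.log (s+1) by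
    rw [show s-1 = 8*y/(s+1) by
      rw [eq_div_iff (ne_of_gt hsp1)]; linear_combination hs2]
    rw [Real.log_div (by positivity) (ne_of_gt hsp1),
      Real.log_mul (by norm_num) (ne_of_gt h0)]]
  ring

lemma gfun_integrable : IntervalIntegrable Gfun volume 0 1 := by
  have hsqC : ContinuousOn (fun y : ℝ => Real.sqrt (1+8*y)) (Set.Icc 0 1) :=
    Real.continuous_sqrt.comp_continuousOn (by fun_prop)
  have hsqne : ∀ y ∈ Set.Icc (0:ℝ) 1, Real.sqrt (1+8*y) ≠ 0 := by
    intro y hy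
    have : (0:ℝ) < 1+8*y := by linarith [hy.1]
    exact (Real.sqrt_pos.mpr this).ne'
  have hqne : ∀ y ∈ Set.Icc (0:ℝ) 1, (1+8*y:ℝ) ≠ 0 := by
    intro y hy; nlinarith [hy.1]
  have hWq : ContinuousOn
      (fun y : ℝ => (5+52*y+264*y^2+480*y^3)/((1+8*y)^2*Real.sqrt (1+8*y)))
      (Set.Icc 0 1) := by
    apply ContinuousOn.div (by fun_prop)
    · exact (by fun_prop : ContinuousOn (fun y : ℝ => ((1:ℝ)+8*y)^2) _).mul hsqC
    · intro y hy
      exact mul_ne_zero (pow_ne_zero 2 (hqne y hy)) (hsqne y hy)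
  have hC1 : ContinuousOn (fun y : ℝ =>
      (128*y^3+48*y^2-46*y-13)/(2*(1+8*y)^2) - 3*Real.log 2
        + (5+52*y+264*y^2+480*y^3)/((1+8*y)^2*Real.sqrt (1+8*y))
          * (2*Real.log (Real.sqrt (1+8*y)+1) - Real.log 8)) (Set.Icc 0 1) := by
    apply ContinuousOn.add
    · apply ContinuousOn.sub
      · apply ContinuousOn.div (by fun_prop) (by fun_prop)
        intro y hy
        have := hqne y hy
        positivity
      · fun_prop
    · apply hWq.mul
      apply ContinuousOn.sub
      · apply ContinuousOn.mul continuousOn_const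
        apply ContinuousOn.log (hsqC.add continuousOn_const)
        intro y hy
        have : (0:ℝ) < Real.sqrt (1+8*y) := Real.sqrt_pos.mpr (by linarith [hy.1])
        simp only [Pi.add_apply]
        linarith
      · exact continuousOn_const
  have h1 : IntervalIntegrable (fun y : ℝ =>
      (128*y^3+48*y^2-46*y-13)/(2*(1+8*y)^2) - 3*Real.log 2
        + (5+52*y+264*y^2+480*y^3)/((1+8*y)^2*Real.sqrt (1+8*y))
          * (2*Real.log (Real.sqrt (1+8*y)+1) - Real.log 8)) volume 0 1 := by
    apply ContinuousOn.intervalIntegrable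
    rwa [uIcc_of_le (by norm_num : (0:ℝ) ≤ 1)]
  have h2 : IntervalIntegrable (fun y : ℝ =>
      (5+52*y+264*y^2+480*y^3)/((1+8*y)^2*Real.sqrt (1+8*y)) * Real.log y) volume 0 1 := by
    apply log_integrable01.continuousOn_mul
    rwa [uIcc_of_le (by norm_num : (0:ℝ) ≤ 1)]
  exact h1.sub h2

/-- For the 3-star with boundary values 2, 1, 0 and conductances c₀, c₁, c₂ summing
to 1, the harmonic extension satisfies h(v) = 2c₀ + c₁, and the integral formula
gives |χ(-2)| = 2 for the one-vertex graph. -/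
theorem stmt_16 :
    (∀ c₀ c₁ c₂ hv : ℝ, 0 < c₀ → 0 < c₁ → 0 < c₂ → c₀ + c₁ + c₂ = 1 →
      c₀ * (hv - 2) + c₁ * (hv - 1) + c₂ * hv = 0 → hv = 2 * c₀ + c₁) ∧
    2 * ∫ c₀ in (0:ℝ)..1, ∫ c₁ in (0:ℝ)..(1 - c₀),
        ((2 * c₀ + c₁ - 2) ^ 2 * (2 * c₀ + c₁ - 1) ^ 2 * (2 * c₀ + c₁) ^ 2)
          / (-4 * c₀ ^ 2 - 4 * c₁ * c₀ + 4 * c₀ - c₁ ^ 2 + c₁) ^ 3 = 2 := by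
  constructor
  · intro c₀ c₁ c₂ hv h0 h1 h2 hsum heq
    linear_combination heq - hv * hsum
  · have hmain : (∫ c₀ in (0:ℝ)..1, ∫ c₁ in (0:ℝ)..(1 - c₀),
        ((2 * c₀ + c₁ - 2) ^ 2 * (2 * c₀ + c₁ - 1) ^ 2 * (2 * c₀ + c₁) ^ 2)
          / (-4 * c₀ ^ 2 - 4 * c₁ * c₀ + 4 * c₀ - c₁ ^ 2 + c₁) ^ 3)
        = 87/64 - 23/64 := by
      apply integral_eq_sub_of_hasDerivAt_of_tendsto (f := Phi) (by norm_num)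
      · intro x hx
        rw [inner_eval x hx.1 hx.2]
        exact hasDerivPhi x hx.1
      · rw [intervalIntegrable_iff, uIoc_of_le (by norm_num : (0:ℝ) ≤ 1)]
        have hG : IntegrableOn Gfun (Set.Ioc 0 1) volume := by
          have := gfun_integrable
          rwa [intervalIntegrable_iff, uIoc_of_le (by norm_num : (0:ℝ) ≤ 1)] at this
        apply hG.congr
        rw [← Measure.restrict_congr_set Ioo_ae_eq_Ioc]
        filter_upwards [ae_restrict_mem measurableSet_Ioo] with x hx
        rw [inner_eval x hx.1 hx.2, iclosed_alt x hx.1]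
      · exact tendsto_phi_zero
      · exact tendsto_phi_one
    rw [hmain]
    norm_num
end

section
/- Let z: V → ℂ solve ∑_{w~v} q_{vw}/(z_v − z_w) = 0 at every interior vertex v, with fixed boundary values, and with invertible Dirichlet Laplacian Δ for conductances c_{vw} = q_{vw}/(z_v − z_w)². Then along any smooth variation of a single edge parameter q_e (e = v₁v₂) with the solution z(q_e) varying smoothly, the derivative satisfies dz_v/dq_e = (G_{v,v₁} − G_{v,v₂})/(z_{v₁} − z_{v₂}), where G is the Green's function (inverse of Δ restricted to interior vertices). -/
/-- Lemma 5.2 (derivative of the realization in an edge weight): if z(t) is a smooth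
family of solutions of the HQD equations in which only the weight on the edge
e = v₁v₂ varies (q_e(t) = t), the boundary values are fixed, and the Dirichlet
Laplacian Δ for the conductances c_{vw} = q_{vw}/(z_v - z_w)² at t₀ is invertible
with inverse Ginv, then dz_v/dq_e = (G_{v,v₁} - G_{v,v₂})/(z_{v₁} - z_{v₂}). -/
theorem stmt_19 {V : Type*} [Fintype V] [DecidableEq V]
    (G : SimpleGraph V) [DecidableRel G.Adj] (Vb : Finset V)
    (q : ℝ → V → V → ℂ) (z : ℝ → V → ℂ) (t₀ : ℝ)
    (hqsym : ∀ t u w, q t u w = q t w u)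
    (v₁ v₂ : V) (hv₁ : v₁ ∉ Vb) (hv₂ : v₂ ∉ Vb) (hadj : G.Adj v₁ v₂)
    -- only the weight on edge v₁v₂ varies, and it equals the parameter t
    (hqe : ∀ t, q t v₁ v₂ = (t : ℂ))
    (hqfix : ∀ t u w, ¬((u = v₁ ∧ w = v₂) ∨ (u = v₂ ∧ w = v₁)) → q t u w = q t₀ u w)
    -- fixed boundary values
    (hbdry : ∀ t, ∀ v ∈ Vb, z t v = z t₀ v)
    -- the HQD equations hold at interior vertices for all t
    (heq : ∀ t, ∀ v, v ∉ Vb →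
      ∑ w ∈ G.neighborFinset v, q t v w / (z t v - z t w) = 0)
    (hzdist : ∀ u w, G.Adj u w → z t₀ u ≠ z t₀ w)
    -- the solution varies smoothly: z' is the derivative at t₀
    (z' : V → ℂ)
    (hderiv : ∀ v : V, HasDerivAt (fun t => z t v) (z' v) t₀)
    -- the Dirichlet Laplacian at t₀ and its inverse (Green's function)
    (c : V → V → ℂ) (hc : ∀ u w, G.Adj u w → c u w = q t₀ u w / (z t₀ u - z t₀ w) ^ 2)
    (Δ Ginv : ({v : V // v ∉ Vb} → ℂ) →ₗ[ℂ] ({v : V // v ∉ Vb} → ℂ))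
    (hΔ : ∀ (f : {v : V // v ∉ Vb} → ℂ) (u : {v : V // v ∉ Vb}),
      Δ f u = ∑ w ∈ G.neighborFinset ↑u,
        c ↑u w * (f u - (if h : w ∈ Vb then 0 else f ⟨w, h⟩)))
    (hGl : ∀ g, Ginv (Δ g) = g) (hGr : ∀ g, Δ (Ginv g) = g) :
    ∀ v : {v : V // v ∉ Vb},
      z' ↑v = (Ginv (Pi.single ⟨v₁, hv₁⟩ 1) v - Ginv (Pi.single ⟨v₂, hv₂⟩ 1) v)
        / (z t₀ v₁ - z t₀ v₂) := by

  classical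
  have hne12 : v₁ ≠ v₂ := hadj.ne
  have hzne : z t₀ v₁ - z t₀ v₂ ≠ 0 := sub_ne_zero.mpr (hzdist v₁ v₂ hadj)
  -- boundary derivatives vanish
  have hz'b : ∀ v ∈ Vb, z' v = 0 := by
    intro v hv
    have h0 : HasDerivAt (fun t => z t v) 0 t₀ := by
      have hcongr : (fun t => z t v) = fun _ => z t₀ v := funext fun t => hbdry t v hv
      rw [hcongr]; exact hasDerivAt_const _ _
    exact (hderiv v).unique h0
  -- derivative of q
  set q' : V → V → ℂ := fun u w =>
    if (u = v₁ ∧ w = v₂) ∨ (u = v₂ ∧ w = v₁) then 1 else 0 with hq'def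
  have hq' : ∀ u w, HasDerivAt (fun t => q t u w) (q' u w) t₀ := by
    intro u w
    by_cases h : (u = v₁ ∧ w = v₂) ∨ (u = v₂ ∧ w = v₁)
    · have h1 : q' u w = 1 := by simp [hq'def, h]
      rw [h1]
      rcases h with ⟨he1, he2⟩ | ⟨he1, he2⟩
      · have hcongr : (fun t => q t u w) = fun t : ℝ => (t : ℂ) :=
          funext fun t => by rw [he1, he2, hqe]
        rw [hcongr]
        simpa using (hasDerivAt_id t₀).ofReal_comp
      · have hcongr : (fun t => q t u w) = fun t : ℝ => (t : ℂ) :=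
          funext fun t => by rw [he1, he2, hqsym, hqe]
        rw [hcongr]
        simpa using (hasDerivAt_id t₀).ofReal_comp
    · have h1 : q' u w = 0 := by simp [hq'def, h]
      rw [h1]
      have hcongr : (fun t => q t u w) = fun _ => q t₀ u w :=
        funext fun t => hqfix t u w h
      rw [hcongr]; exact hasDerivAt_const _ _
  -- key identity at interior vertices
  have key : ∀ u, u ∉ Vb →
      ∑ w ∈ G.neighborFinset u, c u w * (z' u - z' w)
        = ∑ w ∈ G.neighborFinset u, q' u w / (z t₀ u - z t₀ w) := by
    intro u hu
    have hterm : ∀ w ∈ G.neighborFinset u,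
        HasDerivAt (fun t => q t u w / (z t u - z t w))
          (q' u w / (z t₀ u - z t₀ w) - c u w * (z' u - z' w)) t₀ := by
      intro w hw
      have hadjuw : G.Adj u w := (SimpleGraph.mem_neighborFinset G u w).mp hw
      have hdne : z t₀ u - z t₀ w ≠ 0 := sub_ne_zero.mpr (hzdist u w hadjuw)
      have hd := (hq' u w).div ((hderiv u).sub (hderiv w)) hdne
      refine hd.congr_deriv ?_
      simp only [Pi.sub_apply]
      rw [hc u w hadjuw]
      field_simp
    have hsumD := HasDerivAt.fun_sum hterm
    have h0 : HasDerivAt (fun t => ∑ w ∈ G.neighborFinset u,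
        q t u w / (z t u - z t w)) 0 t₀ := by
      have hcongr : (fun t => ∑ w ∈ G.neighborFinset u,
          q t u w / (z t u - z t w)) = fun _ => (0 : ℂ) :=
        funext fun t => heq t u hu
      rw [hcongr]; exact hasDerivAt_const _ _
    have hz : ∑ w ∈ G.neighborFinset u,
        (q' u w / (z t₀ u - z t₀ w) - c u w * (z' u - z' w)) = 0 :=
      hsumD.unique h0
    rw [Finset.sum_sub_distrib] at hz
    exact (sub_eq_zero.mp hz).symm
  -- the source term
  set g : ({v : V // v ∉ Vb} → ℂ) :=
    (z t₀ v₁ - z t₀ v₂)⁻¹ •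
      (Pi.single ⟨v₁, hv₁⟩ 1 - Pi.single ⟨v₂, hv₂⟩ 1) with hg
  set f : ({v : V // v ∉ Vb} → ℂ) := fun v => z' ↑v with hf
  have hΔf : Δ f = g := by
    funext u
    obtain ⟨u, hu⟩ := u
    have hgu : g ⟨u, hu⟩
        = ((if u = v₁ then 1 else 0) - (if u = v₂ then 1 else 0))
          / (z t₀ v₁ - z t₀ v₂) := by
      simp only [hg, Pi.smul_apply, Pi.sub_apply, Pi.single_apply, smul_eq_mul,
        Subtype.mk.injEq]
      rw [div_eq_inv_mul]
    rw [hΔ, hgu]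
    have hstep : ∀ w ∈ G.neighborFinset u,
        c u w * (f ⟨u, hu⟩ - (if h : w ∈ Vb then 0 else f ⟨w, h⟩))
          = c u w * (z' u - z' w) := by
      intro w _
      congr 1
      by_cases hw : w ∈ Vb
      · simp [hf, hw, hz'b w hw]
      · simp [hf, hw]
    rw [Finset.sum_congr rfl hstep, key u hu]
    by_cases h1 : u = v₁
    · have hu2 : u ≠ v₂ := h1 ▸ hne12
      have hstep2 : ∀ w ∈ G.neighborFinset u,
          q' u w / (z t₀ u - z t₀ w)
            = if w = v₂ then 1 / (z t₀ u - z t₀ v₂) else 0 := by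
        intro w _
        by_cases hw : w = v₂
        · simp [hq'def, hw, h1]
        · have hno : ¬((u = v₁ ∧ w = v₂) ∨ (u = v₂ ∧ w = v₁)) := by tauto
          simp only [hq'def]; rw [if_neg hno, zero_div, if_neg hw]
      rw [Finset.sum_congr rfl hstep2, Finset.sum_ite_eq', h1]
      simp [SimpleGraph.mem_neighborFinset, hadj, hne12]
    · by_cases h2 : u = v₂
      · have hadj' : G.Adj v₂ v₁ := hadj.symm
        have hstep2 : ∀ w ∈ G.neighborFinset u,
            q' u w / (z t₀ u - z t₀ w)
              = if w = v₁ then 1 / (z t₀ u - z t₀ v₁) else 0 := by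
          intro w _
          by_cases hw : w = v₁
          · simp [hq'def, hw, h2]
          · have hno : ¬((u = v₁ ∧ w = v₂) ∨ (u = v₂ ∧ w = v₁)) := by tauto
            simp only [hq'def]; rw [if_neg hno, zero_div, if_neg hw]
        rw [Finset.sum_congr rfl hstep2, Finset.sum_ite_eq', h2]
        have hne21 : v₂ ≠ v₁ := fun hne => hne12 hne.symm
        simp only [SimpleGraph.mem_neighborFinset, hadj', if_true, if_neg hne21,
          if_pos rfl]
        rw [div_eq_div_iff (sub_ne_zero.mpr (hzdist _ _ hadj')) hzne]
        ring
      · have hstep2 : ∀ w ∈ G.neighborFinset u,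
            q' u w / (z t₀ u - z t₀ w) = 0 := by
          intro w _
          have hno : ¬((u = v₁ ∧ w = v₂) ∨ (u = v₂ ∧ w = v₁)) := by tauto
          simp only [hq'def]; rw [if_neg hno, zero_div]
        rw [Finset.sum_congr rfl hstep2]
        simp [h1, h2]
  have hfeq : f = Ginv g := by rw [← hΔf, hGl]
  intro v
  have hv : z' ↑v = Ginv g v := congrFun hfeq v
  rw [hv, hg, map_smul, map_sub]
  simp only [Pi.smul_apply, Pi.sub_apply, smul_eq_mul]
  rw [div_eq_inv_mul]
end
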